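/- Let N be an MV-algebra with 0 ≠ 1. The following are equivalent: (a) N is simple, i.e., {0} is the only proper ideal of N; (b) every nonzero element of N has finite order: for every a ≠ 0 there exists k ≥ 1 with ka = 1, where ka denotes a ⊕ a ⊕ ⋯ ⊕ a (k summands); (c) there exists an injective map h : N → [0,1] preserving the operations (h(a ⊕ b) = min(h(a) + h(b), 1), h(¬a) = 1 − h(a), h(0) = 0). -/

import Mathlib

/-- An MV-algebra (Mangani–Mundici axioms). -/
class MV (α : Type*) where
  add : α → α → α
  neg : α → α
  zero : α
  add_comm : ∀ a b : α, add a b = add b a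
  add_assoc : ∀ a b c : α, add a (add b c) = add (add a b) c
  add_zero : ∀ a : α, add a zero = a
  add_neg_zero : ∀ a : α, add a (neg zero) = neg zero
  neg_neg : ∀ a : α, neg (neg a) = a
  luk : ∀ a b : α, add (neg (add (neg a) b)) b = add (neg (add (neg b) a)) a

namespace MV

variable {α : Type*} [MV α]

/-- 1 := ¬0 -/
def one : α := neg zero

/-- a ⊗ b := ¬(¬a ⊕ ¬b) -/
def mul (a b : α) : α := neg (add (neg a) (neg b))

/-- a ∨ b := ¬(¬a ⊕ b) ⊕ b -/
def sup (a b : α) : α := add (neg (add (neg a) b)) b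

/-- a ∧ b := ¬(¬a ∨ ¬b) -/
def inf (a b : α) : α := neg (sup (neg a) (neg b))

/-- a ≤ b iff a ∨ b = b -/
def le (a b : α) : Prop := sup a b = b

/-- An ideal: contains 0, closed under ⊕, downward closed. -/
def IsIdeal (J : Set α) : Prop :=
  zero ∈ J ∧ (∀ a b : α, a ∈ J → b ∈ J → add a b ∈ J) ∧
    (∀ a b : α, le a b → b ∈ J → a ∈ J)

/-- A prime ideal: proper, and a ∧ b ∈ J implies a ∈ J or b ∈ J. -/
def IsPrime (J : Set α) : Prop :=
  IsIdeal J ∧ J ≠ Set.univ ∧ ∀ a b : α, inf a b ∈ J → a ∈ J ∨ b ∈ J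

/-- A maximal ideal: proper, and not properly contained in any proper ideal. -/
def IsMaximal (J : Set α) : Prop :=
  IsIdeal J ∧ J ≠ Set.univ ∧
    ∀ K : Set α, IsIdeal K → K ≠ Set.univ → J ⊆ K → J = K

/-- k·a = a ⊕ a ⊕ ⋯ ⊕ a (k summands). -/
def smul : ℕ → α → α
  | 0, _ => zero
  | k + 1, a => add a (smul k a)

/-- a^k = a ⊗ a ⊗ ⋯ ⊗ a (k factors). -/
def pow (a : α) : ℕ → α
  | 0 => one
  | k + 1 => mul a (pow a k)

/-- A homomorphism into the standard MV-algebra [0,1]. -/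
def Hom (h : α → ℝ) : Prop :=
  (∀ a : α, h a ∈ Set.Icc (0 : ℝ) 1) ∧
  (∀ a b : α, h (add a b) = min (h a + h b) 1) ∧
  (∀ a : α, h (neg a) = 1 - h a) ∧
  h zero = 0

end MV

namespace MV

variable {α : Type*} [MV α]

instance : Std.Associative (MV.add (α := α)) := ⟨fun a b c => (MV.add_assoc a b c).symm⟩
instance : Std.Commutative (MV.add (α := α)) := ⟨MV.add_comm⟩

theorem zero_add (a : α) : add zero a = a := by rw [add_comm, add_zero]

theorem neg_one : (neg one : α) = zero := neg_neg zero

theorem add_one (a : α) : add a one = one := add_neg_zero a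

theorem one_add (a : α) : add one a = one := by rw [add_comm, add_one]

theorem neg_inj {a b : α} (h : neg a = neg b) : a = b := by
  rw [← neg_neg a, h, neg_neg]

theorem neg_add_self (a : α) : add (neg a) a = one := by
  have h := luk a (one : α)
  rw [add_one, neg_one, zero_add] at h
  exact h.symm

theorem add_neg_self (a : α) : add a (neg a) = one := by
  rw [add_comm, neg_add_self]

theorem eq_one_iff_neg_eq_zero {a : α} : a = one ↔ neg a = zero := by
  constructor
  · rintro rfl; exact neg_one
  · intro h; rw [← neg_neg a, h]; rfl

theorem sup_comm (a b : α) : sup a b = sup b a := luk a b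

theorem le_iff_one {a b : α} : le a b ↔ add (neg a) b = one := by
  constructor
  · intro h
    have h' : add (neg (add (neg a) b)) b = b := h
    have h2 : add (neg a) b = add (neg a) (add (neg (add (neg a) b)) b) := by
      conv_lhs => rw [← h']
    have h3 : add (neg a) (add (neg (add (neg a) b)) b)
        = add (neg (add (neg a) b)) (add (neg a) b) := by ac_rfl
    rw [h2, h3, neg_add_self]
  · intro h
    unfold le sup
    rw [h, neg_one, zero_add]

theorem le_iff_exists {a b : α} : le a b ↔ ∃ c, add a c = b := by
  constructor
  · intro h
    refine ⟨neg (add (neg b) a), ?_⟩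
    have h2 : add (neg (add (neg b) a)) a = b := by
      rw [show add (neg (add (neg b) a)) a = sup b a from rfl, sup_comm]; exact h
    rw [add_comm]; exact h2
  · rintro ⟨c, rfl⟩
    rw [le_iff_one]
    have : add (neg a) (add a c) = add (add (neg a) a) c := by ac_rfl
    rw [this, neg_add_self, one_add]

theorem le_refl (a : α) : le a a := le_iff_one.2 (neg_add_self a)

theorem le_trans {a b c : α} (h1 : le a b) (h2 : le b c) : le a c := by
  obtain ⟨x, rfl⟩ := le_iff_exists.1 h1
  obtain ⟨y, rfl⟩ := le_iff_exists.1 h2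
  exact le_iff_exists.2 ⟨add x y, (add_assoc a x y)⟩

theorem le_antisymm {a b : α} (h1 : le a b) (h2 : le b a) : a = b := by
  have := sup_comm a b
  unfold le at h1 h2
  rw [h1, h2] at this
  exact this.symm

theorem zero_le (a : α) : le zero a := by
  rw [le_iff_one]
  show add (neg zero) a = one
  rw [show (neg zero : α) = one from rfl, one_add]

theorem le_one (a : α) : le a one := le_iff_one.2 (add_one _)

theorem le_zero_iff {a : α} : le a zero ↔ a = zero := by
  constructor
  · intro h
    rw [le_iff_one, add_zero] at h
    exact neg_inj (by rw [h]; rfl)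
  · rintro rfl; exact le_refl _

theorem one_le_iff {a : α} : le one a ↔ a = one := by
  constructor
  · intro h
    rw [le_iff_one, neg_one, zero_add] at h
    exact h
  · rintro rfl; exact le_refl _

theorem add_le_add {a b c d : α} (h1 : le a b) (h2 : le c d) :
    le (add a c) (add b d) := by
  obtain ⟨x, rfl⟩ := le_iff_exists.1 h1
  obtain ⟨y, rfl⟩ := le_iff_exists.1 h2
  exact le_iff_exists.2 ⟨add x y, by ac_rfl⟩

theorem le_add_left (a b : α) : le a (add a b) := le_iff_exists.2 ⟨b, rfl⟩

theorem le_add_right (a b : α) : le b (add a b) := le_iff_exists.2 ⟨a, add_comm b a⟩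

theorem neg_le_neg {a b : α} (h : le a b) : le (neg b) (neg a) := by
  rw [le_iff_one] at h ⊢
  rw [neg_neg, ← h, add_comm]

theorem neg_le_iff {a b : α} : le (neg b) (neg a) ↔ le a b := by
  constructor
  · intro h; have := neg_le_neg h; rwa [neg_neg, neg_neg] at this
  · exact neg_le_neg

theorem mul_comm (a b : α) : mul a b = mul b a := by
  unfold mul; rw [add_comm]

theorem mul_assoc (a b c : α) : mul (mul a b) c = mul a (mul b c) := by
  unfold mul
  rw [neg_neg, neg_neg]
  congr 1
  ac_rfl

theorem neg_mul (a b : α) : neg (mul a b) = add (neg a) (neg b) := by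
  unfold mul; rw [neg_neg]

theorem neg_add (a b : α) : neg (add a b) = mul (neg a) (neg b) := by
  unfold mul; rw [neg_neg, neg_neg]

theorem mul_one (a : α) : mul a one = a := by
  unfold mul; rw [neg_one, add_zero, neg_neg]

theorem mul_zero (a : α) : mul a zero = zero := by
  unfold mul
  rw [show (neg zero : α) = one from rfl, add_one, neg_one]

theorem mul_neg_self (a : α) : mul a (neg a) = zero := by
  unfold mul
  rw [neg_neg, neg_add_self, neg_one]

theorem mul_le_iff {a b c : α} : le (mul a c) b ↔ le c (add (neg a) b) := by
  rw [le_iff_one, le_iff_one, neg_mul]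
  constructor
  · intro h; rw [← h]; ac_rfl
  · intro h; rw [← h]; ac_rfl

theorem mul_le_mul {a b c d : α} (h1 : le a b) (h2 : le c d) :
    le (mul a c) (mul b d) := by
  unfold mul
  exact neg_le_neg (add_le_add (neg_le_neg h1) (neg_le_neg h2))

theorem mul_le_left (a b : α) : le (mul a b) a := by
  rw [mul_le_iff, neg_add_self]
  exact le_one b

theorem mul_le_right (a b : α) : le (mul a b) b := by
  rw [mul_comm]; exact mul_le_left b a

end MV
namespace MV

variable {α : Type*} [MV α]

theorem le_sup_right (a b : α) : le b (sup a b) :=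
  le_add_right _ _

theorem le_sup_left (a b : α) : le a (sup a b) := by
  rw [sup_comm]; exact le_sup_right b a

theorem sup_idem (a : α) : sup a a = a := by
  unfold sup; rw [neg_add_self, neg_one, zero_add]

theorem sup_le_sup_left {a c : α} (h : le a c) (b : α) : le (sup a b) (sup c b) := by
  unfold sup
  exact add_le_add (neg_le_neg (add_le_add (neg_le_neg h) (le_refl b))) (le_refl b)

theorem sup_le {a b c : α} (h1 : le a c) (h2 : le b c) : le (sup a b) c := by
  have s1 : le (sup a b) (sup c b) := sup_le_sup_left h1 b
  have s2 : le (sup c b) (sup c c) := by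
    rw [sup_comm c b, sup_comm c c]; exact sup_le_sup_left h2 c
  rw [sup_idem] at s2
  exact le_trans s1 s2

theorem sup_of_le {a b : α} (h : le b a) : sup a b = a :=
  le_antisymm (sup_le (le_refl a) h) (le_sup_left a b)

theorem sup_of_le' {a b : α} (h : le a b) : sup a b = b := h

theorem inf_le_left (a b : α) : le (inf a b) a := by
  unfold inf
  have := le_sup_left (neg a) (neg b)
  have h2 := neg_le_neg this
  rwa [neg_neg] at h2

theorem inf_le_right (a b : α) : le (inf a b) b := by
  unfold inf
  have := le_sup_right (neg a) (neg b)
  have h2 := neg_le_neg this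
  rwa [neg_neg] at h2

theorem le_inf {a b c : α} (h1 : le c a) (h2 : le c b) : le c (inf a b) := by
  unfold inf
  rw [← neg_neg c]
  exact neg_le_neg (sup_le (neg_le_neg h1) (neg_le_neg h2))

theorem inf_comm (a b : α) : inf a b = inf b a := by
  unfold inf; rw [sup_comm]

theorem inf_of_le {a b : α} (h : le a b) : inf a b = a :=
  le_antisymm (inf_le_left a b) (le_inf (le_refl a) h)

theorem inf_one (a : α) : inf a one = a := inf_of_le (le_one a)

theorem le_iff_mul_neg {a b : α} : le a b ↔ mul a (neg b) = zero := by
  have h : mul a (neg b) = neg (add (neg a) b) := by unfold mul; rw [neg_neg]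
  rw [h, le_iff_one, eq_one_iff_neg_eq_zero]

theorem inf_eq_mul (a b : α) : inf a b = mul a (add (neg a) b) := by
  unfold inf
  rw [sup_comm]
  unfold sup mul
  rw [neg_neg]
  congr 1
  rw [add_comm]
  congr 2
  rw [add_comm]

theorem add_mul_neg (a b : α) : add (mul a b) (neg b) = sup a (neg b) := rfl


/-- Lemma L : if a ≤ ¬b then (a ⊕ b) ⊗ ¬b = a. -/
theorem mul_add_neg_of_le {a b : α} (h : le a (neg b)) :
    mul (add a b) (neg b) = a := by
  apply le_antisymm
  · rw [mul_comm, mul_le_iff, neg_neg, add_comm]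
    exact le_refl _
  · -- a ≤ (a⊕b)⊗¬b  ↔  sup (neg a) b ≤ neg a
    have key : le (add (neg (add a b)) b) (neg a) := by
      have : add (neg (add a b)) b = sup (neg a) b := by
        unfold sup; rw [neg_neg]
      rw [this]
      refine sup_le (le_refl _) ?_
      have h2 := neg_le_neg h
      rwa [neg_neg] at h2
    have h2 : le (mul a (add (neg (add a b)) b)) zero := by
      rw [mul_le_iff, add_zero]; exact key
    have h3 : mul a (add (neg (add a b)) b) = zero := le_zero_iff.1 h2
    have h4 : neg (mul (add a b) (neg b)) = add (neg (add a b)) b := by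
      rw [neg_mul, neg_neg]
    rw [le_iff_mul_neg, h4]
    exact h3

/-- if a ⊕ b = 1 then ¬b ⊕ (a ⊗ b) = a. -/
theorem neg_add_mul_of_add_one {a b : α} (h : add a b = one) :
    add (neg b) (mul a b) = a := by
  apply neg_inj
  have h1 : neg (add (neg b) (mul a b)) = mul b (add (neg b) (neg a)) := by
    rw [neg_add, neg_neg, neg_mul, add_comm]
  rw [h1]
  have h2 : mul b (add (neg b) (neg a)) = inf b (neg a) := (inf_eq_mul b (neg a)).symm
  rw [h2]
  rw [inf_comm]
  exact inf_of_le (by rw [le_iff_one, neg_neg]; exact h)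

end MV
namespace MV

variable {α : Type*} [MV α]

theorem mul_add_neg_le (a b : α) : le (mul (add a b) (neg a)) b := by
  rw [mul_comm, mul_le_iff, neg_neg]
  exact le_refl _

theorem add_inf (a b c : α) : add a (inf b c) = inf (add a b) (add a c) := by
  apply le_antisymm
  · exact le_inf (add_le_add (le_refl a) (inf_le_left b c))
      (add_le_add (le_refl a) (inf_le_right b c))
  · set w := inf (add a b) (add a c) with hw
    have h1 : le (mul w (neg a)) b := by
      have := mul_le_mul (inf_le_left (add a b) (add a c)) (le_refl (neg a))
      exact le_trans this (mul_add_neg_le a b)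
    have h2 : le (mul w (neg a)) c := by
      have := mul_le_mul (inf_le_right (add a b) (add a c)) (le_refl (neg a))
      exact le_trans this (mul_add_neg_le a c)
    have h3 : le (mul w (neg a)) (inf b c) := le_inf h1 h2
    have h4 : le (mul (neg a) w) (inf b c) := by rwa [mul_comm]
    rw [mul_le_iff, neg_neg] at h4
    exact h4

theorem inf_add_le (x y z : α) :
    le (inf x (add y z)) (add (inf x y) (inf x z)) := by
  have e1 : add (inf x y) (inf x z) = inf (add (inf x y) x) (add (inf x y) z) :=
    add_inf (inf x y) x z
  have e2 : add (inf x y) z = add z (inf x y) := add_comm _ _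
  have e3 : add z (inf x y) = inf (add z x) (add z y) := add_inf z x y
  rw [e1, e2, e3]
  refine le_inf ?_ (le_inf ?_ ?_)
  · exact le_trans (inf_le_left x (add y z)) (le_add_right _ _)
  · exact le_trans (inf_le_left x (add y z)) (le_add_right _ _)
  · rw [add_comm z y]; exact inf_le_right x (add y z)

theorem smul_zero_elem (k : ℕ) : (smul k zero : α) = zero := by
  induction k with
  | zero => rfl
  | succ n ih => show add zero (smul n zero) = zero; rw [ih, add_zero]

theorem smul_succ (k : ℕ) (a : α) : smul (k+1) a = add a (smul k a) := rfl

theorem smul_add_dist (m n : ℕ) (a : α) :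
    smul (m + n) a = add (smul m a) (smul n a) := by
  induction m with
  | zero => rw [Nat.zero_add]; exact (zero_add _).symm
  | succ k ih =>
    have : k + 1 + n = (k + n) + 1 := by omega
    rw [this, smul_succ, ih, smul_succ]
    ac_rfl

theorem smul_le_smul {a b : α} (k : ℕ) (h : le a b) : le (smul k a) (smul k b) := by
  induction k with
  | zero => exact le_refl _
  | succ n ih => exact add_le_add h ih

theorem inf_smul_le (x y : α) (k : ℕ) :
    le (inf x (smul k y)) (smul k (inf x y)) := by
  induction k with
  | zero =>
    show le (inf x zero) zero
    exact inf_le_right _ _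
  | succ n ih =>
    rw [smul_succ, smul_succ]
    refine le_trans (inf_add_le x y (smul n y)) ?_
    exact add_le_add (le_refl _) ih

/-- (a ⊖ b) ∧ (b ⊖ a) = 0 -/
theorem inf_sub_sub (a b : α) :
    inf (neg (add (neg a) b)) (neg (add (neg b) a)) = zero := by
  set c := neg (add (neg a) b) with hc
  set d := neg (add (neg b) a) with hd
  set v := sup a b with hv
  have hcb : add c b = v := rfl
  have hda : add d a = v := by rw [hv, sup_comm]; rfl
  have hcnb : le c (neg b) := by
    rw [le_iff_one, hc, neg_neg]
    have : add (add (neg a) b) (neg b) = add (neg a) (add b (neg b)) := by ac_rfl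
    rw [this, add_neg_self, add_one]
  have hdna : le d (neg a) := by
    rw [le_iff_one, hd, neg_neg]
    have : add (add (neg b) a) (neg a) = add (neg b) (add a (neg a)) := by ac_rfl
    rw [this, add_neg_self, add_one]
  have henv : le (inf c d) (neg v) := by
    have : (neg v : α) = inf (neg a) (neg b) := by
      rw [hv]; unfold inf; rw [neg_neg, neg_neg]
    rw [this]
    exact le_inf (le_trans (inf_le_right c d) hdna) (le_trans (inf_le_left c d) hcnb)
  have hiabc : add (inf a b) c = a := by
    rw [inf_eq_mul, hc]
    have : (c : α) = neg (add (neg a) b) := hc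
    rw [← hc]
    -- add (mul a (add (neg a) b)) c = sup a c  since c = neg (add (neg a) b)
    have h2 : add (mul a (add (neg a) b)) c = sup a c := by
      rw [hc]; exact add_mul_neg a (add (neg a) b)
    rw [h2]
    apply sup_of_le
    rw [hc]
    have : neg (add (neg a) b) = mul a (neg b) := by unfold mul; rw [neg_neg]
    rw [this]
    exact mul_le_left a (neg b)
  have hev : add (inf c d) v = v := by
    have e1 : add (inf c d) v = inf (add c v) (add d v) := by
      rw [add_comm (inf c d) v, add_inf v c d, add_comm v c, add_comm v d]
    have e2 : add c v = add a (add c d) := by rw [← hda]; ac_rfl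
    have e3 : add d v = add b (add c d) := by rw [← hcb]; ac_rfl
    have e4 : inf (add a (add c d)) (add b (add c d)) = add (inf a b) (add c d) := by
      rw [add_comm (inf a b) (add c d), add_inf, add_comm (add c d) a, add_comm (add c d) b]
    rw [e1, e2, e3, e4, add_assoc, hiabc, add_comm]
    exact hda
  have hfin := mul_add_neg_of_le henv
  rw [hev] at hfin
  rw [← hfin]
  exact mul_neg_self v

end MV
namespace MV

variable {α : Type*} [MV α]

instance : Std.Associative (MV.mul (α := α)) := ⟨mul_assoc⟩
instance : Std.Commutative (MV.mul (α := α)) := ⟨mul_comm⟩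

theorem mul_eq_zero_iff {a b : α} : mul a b = zero ↔ le a (neg b) := by
  rw [le_iff_mul_neg, neg_neg]

theorem add_eq_one_iff {a b : α} : add a b = one ↔ le (neg a) b := by
  rw [le_iff_one, neg_neg]

/-- I1 : a ≤ ¬b → c ≤ ¬b → (a⊕b)⊗c = a⊗(b⊕c) -/
theorem mv_I1 {a b c : α} (ha : le a (neg b)) (hc : le c (neg b)) :
    mul (add a b) c = mul a (add b c) := by
  have hcL : mul (add c b) (neg b) = c := mul_add_neg_of_le hc
  have haL : mul (add a b) (neg b) = a := mul_add_neg_of_le ha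
  calc mul (add a b) c = mul (add a b) (mul (add c b) (neg b)) := by rw [hcL]
    _ = mul (mul (add a b) (neg b)) (add c b) := by ac_rfl
    _ = mul a (add b c) := by rw [haL, add_comm c b]

/-- I2 : a ≤ ¬b → ¬b ≤ c → (a⊕b)⊗c = a⊕(b⊗c) -/
theorem mv_I2 {a b c : α} (ha : le a (neg b)) (hc : le (neg b) c) :
    mul (add a b) c = add a (mul b c) := by
  have hncb : le (neg c) b := by
    have := neg_le_neg hc
    rwa [neg_neg] at this
  set Y := add a (mul b c) with hY
  have hYc : le Y c := by
    have h1 : le Y (add (neg b) (mul b c)) := add_le_add ha (le_refl _)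
    have h2 : add (neg b) (mul b c) = add (mul b c) (neg b) := add_comm _ _
    have h3 : add (mul b c) (neg b) = sup c (neg b) := by
      rw [mul_comm]; exact add_mul_neg c b
    have h4 : sup c (neg b) = c := sup_of_le hc
    rw [h2, h3, h4] at h1
    exact h1
  have hYv : add Y (neg c) = add a b := by
    rw [hY]
    have h1 : add (add a (mul b c)) (neg c) = add a (add (mul b c) (neg c)) := by ac_rfl
    rw [h1, add_mul_neg b c, sup_of_le hncb]
  have hYeq := mul_add_neg_of_le (b := neg c) (by rwa [neg_neg])
  rw [hYv] at hYeq
  rw [neg_neg] at hYeq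
  exact hYeq

section Chain

variable (htot : ∀ a b : α, le a b ∨ le b a)

/-- in a chain, a⊕b ≠ 1 implies a⊗b = 0 -/
theorem chain_mul_zero (htot : ∀ a b : α, le a b ∨ le b a) {a b : α}
    (h : add a b ≠ one) : mul a b = zero := by
  rcases htot a (neg b) with h1 | h1
  · exact mul_eq_zero_iff.2 h1
  · exfalso
    apply h
    rw [add_eq_one_iff]
    have h2 := neg_le_neg h1
    rwa [neg_neg] at h2

end Chain

end MV
namespace MV

variable {α : Type*} [MV α]

theorem le_of_sub_zero {a b : α} (h : neg (add (neg a) b) = zero) : le a b := by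
  rw [le_iff_one, eq_one_iff_neg_eq_zero]
  exact h

theorem chain_of_order
    (hord : ∀ a : α, a ≠ zero → ∃ k : ℕ, 1 ≤ k ∧ smul k a = one) :
    ∀ a b : α, le a b ∨ le b a := by
  intro a b
  by_cases h1 : le a b
  · exact Or.inl h1
  by_cases h2 : le b a
  · exact Or.inr h2
  exfalso
  set c := neg (add (neg a) b) with hc
  set d := neg (add (neg b) a) with hd
  have hcne : c ≠ zero := fun h => h1 (le_of_sub_zero h)
  have hdne : d ≠ zero := fun h => h2 (le_of_sub_zero h)
  obtain ⟨k, _, hk⟩ := hord c hcne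
  have e1 : le d (inf d (smul k c)) := by
    rw [hk, inf_one]; exact le_refl d
  have e2 : le (inf d (smul k c)) (smul k (inf d c)) := inf_smul_le d c k
  have e3 : inf d c = zero := by rw [inf_comm]; exact inf_sub_sub a b
  have e4 : le d zero := by
    have h5 := le_trans e1 e2
    rwa [e3, smul_zero_elem] at h5
  exact hdne (le_zero_iff.1 e4)

end MV
namespace MV

variable {α : Type*} [MV α]

open Classical in
/-- addition with carry on ℕ × α -/
noncomputable def Madd (x y : ℕ × α) : ℕ × α :=
  if add x.2 y.2 = one then (x.1 + y.1 + 1, mul x.2 y.2)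
  else (x.1 + y.1, add x.2 y.2)

theorem Madd_pos {x y : ℕ × α} (h : add x.2 y.2 = one) :
    Madd x y = (x.1 + y.1 + 1, mul x.2 y.2) := by
  unfold Madd; rw [if_pos h]

theorem Madd_neg {x y : ℕ × α} (h : add x.2 y.2 ≠ one) :
    Madd x y = (x.1 + y.1, add x.2 y.2) := by
  unfold Madd; rw [if_neg h]

theorem Madd_comm (x y : ℕ × α) : Madd x y = Madd y x := by
  unfold Madd
  rw [MV.add_comm y.2 x.2, MV.mul_comm y.2 x.2, Nat.add_comm y.1 x.1]

theorem Madd_assoc (htot : ∀ a b : α, le a b ∨ le b a) (x y z : ℕ × α) :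
    Madd (Madd x y) z = Madd x (Madd y z) := by
  obtain ⟨n, a⟩ := x
  obtain ⟨m, b⟩ := y
  obtain ⟨k, c⟩ := z
  by_cases hab : add a b = one
  · -- case B
    rw [Madd_pos (x := (n,a)) (y := (m,b)) hab]
    have hnab : le (neg a) b := add_eq_one_iff.1 hab
    by_cases h1 : add (mul a b) c = one
    · -- B1
      rw [Madd_pos (x := (n + m + 1, mul a b)) (y := (k, c)) h1]
      have hncab : le (neg c) (mul a b) := by
        have := neg_le_neg (add_eq_one_iff.1 h1)
        rwa [neg_neg] at this
      have hbc : add b c = one := by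
        rw [add_eq_one_iff]
        exact le_trans (neg_le_neg (mul_le_right a b)) (add_eq_one_iff.1 h1)
      rw [Madd_pos (x := (m,b)) (y := (k,c)) hbc]
      have habc : add a (mul b c) = one := by
        rw [add_eq_one_iff]
        have e1 : le (neg (mul b c)) a := by
          have e2 : le (add (neg b) (neg c)) (add (neg b) (mul a b)) :=
            add_le_add (le_refl _) hncab
          rw [neg_add_mul_of_add_one hab] at e2
          have e3 : neg (mul b c) = add (neg b) (neg c) := neg_mul b c
          rwa [← e3] at e2
        have := neg_le_neg e1
        rwa [neg_neg] at this
      rw [Madd_pos (x := (n,a)) (y := (m + k + 1, mul b c)) habc]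
      simp only [Prod.mk.injEq]
      exact ⟨by omega, mul_assoc a b c⟩
    · -- B2
      rw [Madd_neg (x := (n + m + 1, mul a b)) (y := (k, c)) h1]
      by_cases hbc : add b c = one
      · -- B2a
        rw [Madd_pos (x := (m,b)) (y := (k,c)) hbc]
        have hnbc : le (neg b) c := add_eq_one_iff.1 hbc
        have hncb : le (neg c) b := by
          rw [← add_eq_one_iff, add_comm]; exact hbc
        have habc : add a (mul b c) ≠ one := by
          intro hcon
          apply h1
          rw [add_eq_one_iff] at hcon ⊢
          -- neg (mul a b) = ¬a ⊕ ¬b ≤ (b⊗c)⊕¬b = c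
          have e1 : le (add (neg a) (neg b)) (add (mul b c) (neg b)) :=
            add_le_add hcon (le_refl _)
          have e2 : add (mul b c) (neg b) = add (neg b) (mul c b) := by
            rw [mul_comm b c, add_comm]
          have e3 : add (neg b) (mul c b) = c :=
            neg_add_mul_of_add_one (by rw [add_comm]; exact hbc)
          rw [e2, e3] at e1
          rw [neg_mul]
          exact e1
        rw [Madd_neg (x := (n,a)) (y := (m + k + 1, mul b c)) habc]
        simp only [Prod.mk.injEq]
        constructor
        · omega
        · -- (a⊗b)⊕c = a⊕(b⊗c) : dual I1
          apply neg_inj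
          have e1 : neg (add (mul a b) c) = mul (add (neg a) (neg b)) (neg c) := by
            rw [neg_add, neg_mul]
          have e2 : neg (add a (mul b c)) = mul (neg a) (add (neg b) (neg c)) := by
            rw [neg_add, neg_mul]
          rw [e1, e2]
          refine mv_I1 ?_ ?_ <;> rw [neg_neg]
          · exact hnab
          · exact hncb
      · -- B2b
        rw [Madd_neg (x := (m,b)) (y := (k,c)) hbc]
        have habc : add a (add b c) = one := by
          rw [add_eq_one_iff]
          exact le_trans hnab (le_add_left b c)
        rw [Madd_pos (x := (n,a)) (y := (m + k, add b c)) habc]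
        simp only [Prod.mk.injEq]
        constructor
        · omega
        · -- (a⊗b)⊕c = a⊗(b⊕c) : dual I2
          apply neg_inj
          have e1 : neg (add (mul a b) c) = mul (add (neg a) (neg b)) (neg c) := by
            rw [neg_add, neg_mul]
          have e2 : neg (mul a (add b c)) = add (neg a) (mul (neg b) (neg c)) := by
            rw [neg_mul, neg_add]
          rw [e1, e2]
          refine mv_I2 ?_ ?_
          · rw [neg_neg]; exact hnab
          · rw [neg_neg]
            exact mul_eq_zero_iff.1 (chain_mul_zero htot hbc)
  · -- case A
    rw [Madd_neg (x := (n,a)) (y := (m,b)) hab]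
    have hanb : le a (neg b) := mul_eq_zero_iff.1 (chain_mul_zero htot hab)
    by_cases hbc : add b c = one
    · -- A2
      rw [Madd_pos (x := (m,b)) (y := (k,c)) hbc]
      have hnbc : le (neg b) c := add_eq_one_iff.1 hbc
      have hab1 : add (add a b) c = one := by
        rw [← MV.add_assoc, add_eq_one_iff]
        -- ¬a ≤ b ⊕ c ; since b⊕c = 1
        rw [hbc]
        exact le_one _
      rw [Madd_pos (x := (n + m, add a b)) (y := (k,c)) hab1]
      have habc : add a (mul b c) ≠ one := by
        intro hcon
        apply hab
        rw [add_eq_one_iff] at hcon ⊢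
        exact le_trans hcon (mul_le_left b c)
      rw [Madd_neg (x := (n,a)) (y := (m + k + 1, mul b c)) habc]
      simp only [Prod.mk.injEq]
      exact ⟨by omega, mv_I2 hanb hnbc⟩
    · -- A1
      rw [Madd_neg (x := (m,b)) (y := (k,c)) hbc]
      have hcnb : le c (neg b) := by
        rw [← mul_eq_zero_iff, mul_comm]
        exact chain_mul_zero htot hbc
      by_cases habc : add (add a b) c = one
      · have habc' : add a (add b c) = one := by rw [MV.add_assoc]; exact habc
        rw [Madd_pos (x := (n + m, add a b)) (y := (k,c)) habc]
        rw [Madd_pos (x := (n,a)) (y := (m + k, add b c)) habc']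
        simp only [Prod.mk.injEq]
        exact ⟨by omega, mv_I1 hanb hcnb⟩
      · have habc' : add a (add b c) ≠ one := by rw [MV.add_assoc]; exact habc
        rw [Madd_neg (x := (n + m, add a b)) (y := (k,c)) habc]
        rw [Madd_neg (x := (n,a)) (y := (m + k, add b c)) habc']
        simp only [Prod.mk.injEq]
        exact ⟨by omega, (MV.add_assoc a b c).symm⟩

end MV
namespace MV

variable {α : Type*} [MV α]

noncomputable def Msmul (x : ℕ × α) : ℕ → ℕ × α
  | 0 => x
  | 1 => x
  | (k+2) => Madd x (Msmul x (k+1))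

theorem Msmul_one (x : ℕ × α) : Msmul x 1 = x := rfl

theorem Msmul_succ (x : ℕ × α) {q : ℕ} (hq : 1 ≤ q) :
    Msmul x (q + 1) = Madd x (Msmul x q) := by
  obtain ⟨k, rfl⟩ : ∃ k, q = k + 1 := ⟨q - 1, by omega⟩
  rfl

theorem Msmul_add (htot : ∀ a b : α, le a b ∨ le b a) (x : ℕ × α) {p q : ℕ}
    (hp : 1 ≤ p) (hq : 1 ≤ q) :
    Msmul x (p + q) = Madd (Msmul x p) (Msmul x q) := by
  induction p with
  | zero => omega
  | succ n ih =>
    by_cases hn : 1 ≤ n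
    · have e1 : n + 1 + q = (n + q) + 1 := by omega
      rw [e1, Msmul_succ x (by omega), ih hn, Msmul_succ x hn]
      rw [Madd_assoc htot]
    · have hn0 : n = 0 := by omega
      subst hn0
      rw [Msmul_one, Nat.add_comm 1 q, Msmul_succ x hq, Madd_comm]

theorem Madd_smul_dist (htot : ∀ a b : α, le a b ∨ le b a) (x y : ℕ × α) {q : ℕ}
    (hq : 1 ≤ q) : Msmul (Madd x y) q = Madd (Msmul x q) (Msmul y q) := by
  induction q with
  | zero => omega
  | succ n ih =>
    by_cases hn : 1 ≤ n
    · rw [Msmul_succ _ hn, Msmul_succ x hn, Msmul_succ y hn, ih hn]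
      set X := Msmul x n
      set Y := Msmul y n
      calc Madd (Madd x y) (Madd X Y)
          = Madd x (Madd y (Madd X Y)) := (Madd_assoc htot _ _ _)
        _ = Madd x (Madd (Madd y X) Y) := by rw [Madd_assoc htot y X Y]
        _ = Madd x (Madd (Madd X y) Y) := by rw [Madd_comm y X]
        _ = Madd x (Madd X (Madd y Y)) := by rw [Madd_assoc htot X y Y]
        _ = Madd (Madd x X) (Madd y Y) := by rw [Madd_assoc htot x X _]
    · have hn0 : n = 0 := by omega
      subst hn0
      rfl

theorem Madd_fst_lb (x y : ℕ × α) : x.1 + y.1 ≤ (Madd x y).1 := by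
  unfold Madd; split_ifs <;> simp

theorem Madd_fst_ub (x y : ℕ × α) : (Madd x y).1 ≤ x.1 + y.1 + 1 := by
  unfold Madd; split_ifs <;> simp

noncomputable def Ffn (a : α) (q : ℕ) : ℕ := (Msmul ((0 : ℕ), a) q).1

theorem Ffn_one_val (a : α) : Ffn a 1 = 0 := rfl

theorem Ffn_superadd (htot : ∀ a b : α, le a b ∨ le b a) (a : α) {p q : ℕ}
    (hp : 1 ≤ p) (hq : 1 ≤ q) : Ffn a p + Ffn a q ≤ Ffn a (p + q) := by
  unfold Ffn
  rw [Msmul_add htot _ hp hq]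
  exact Madd_fst_lb _ _

theorem Ffn_subadd (htot : ∀ a b : α, le a b ∨ le b a) (a : α) {p q : ℕ}
    (hp : 1 ≤ p) (hq : 1 ≤ q) : Ffn a (p + q) ≤ Ffn a p + Ffn a q + 1 := by
  unfold Ffn
  rw [Msmul_add htot _ hp hq]
  exact Madd_fst_ub _ _

theorem Ffn_le (a : α) {q : ℕ} (hq : 1 ≤ q) : Ffn a q ≤ q - 1 := by
  induction q with
  | zero => omega
  | succ n ih =>
    by_cases hn : 1 ≤ n
    · have e1 : Ffn a (n + 1) = (Madd ((0:ℕ), a) (Msmul ((0:ℕ), a) n)).1 := by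
        unfold Ffn; rw [Msmul_succ _ hn]
      have := Madd_fst_ub ((0:ℕ), a) (Msmul ((0:ℕ), a) n)
      have h2 := ih hn
      unfold Ffn at h2
      omega
    · have hn0 : n = 0 := by omega
      subst hn0
      simp [Ffn_one_val]

theorem Ffn_mul_le (htot : ∀ a b : α, le a b ∨ le b a) (a : α) {k q : ℕ}
    (hk : 1 ≤ k) (hq : 1 ≤ q) : k * Ffn a q ≤ Ffn a (k * q) := by
  induction k with
  | zero => omega
  | succ n ih =>
    by_cases hn : 1 ≤ n
    · have e1 : (n + 1) * q = n * q + q := by ring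
      rw [e1]
      calc (n + 1) * Ffn a q = n * Ffn a q + Ffn a q := by ring
        _ ≤ Ffn a (n * q) + Ffn a q := by
            exact Nat.add_le_add_right (ih hn) _
        _ ≤ Ffn a (n * q + q) := Ffn_superadd htot a (Nat.one_le_iff_ne_zero.2 (Nat.mul_ne_zero (by omega) (by omega))) hq
    · have hn0 : n = 0 := by omega
      subst hn0
      simp

theorem Ffn_mul_ge (htot : ∀ a b : α, le a b ∨ le b a) (a : α) {k q : ℕ}
    (hk : 1 ≤ k) (hq : 1 ≤ q) : Ffn a (q * k) ≤ q * Ffn a k + (q - 1) := by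
  induction q with
  | zero => omega
  | succ n ih =>
    by_cases hn : 1 ≤ n
    · have e1 : (n + 1) * k = n * k + k := by ring
      rw [e1]
      calc Ffn a (n * k + k) ≤ Ffn a (n * k) + Ffn a k + 1 :=
            Ffn_subadd htot a (Nat.one_le_iff_ne_zero.2 (Nat.mul_ne_zero (by omega) (by omega))) hk
        _ ≤ n * Ffn a k + (n - 1) + Ffn a k + 1 := by
            have := ih hn; omega
        _ ≤ (n + 1) * Ffn a k + (n + 1 - 1) := by
            have : (n+1) * Ffn a k = n * Ffn a k + Ffn a k := by ring
            omega
    · have hn0 : n = 0 := by omega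
      subst hn0
      simp

end MV
namespace MV

variable {α : Type*} [MV α]

theorem Msmul_zero_elem (hnt : (zero : α) ≠ one) {q : ℕ} (hq : 1 ≤ q) :
    Msmul ((0:ℕ), (zero:α)) q = ((0:ℕ), (zero:α)) := by
  induction q with
  | zero => omega
  | succ n ih =>
    by_cases hn : 1 ≤ n
    · rw [Msmul_succ _ hn, ih hn, Madd_neg (by simpa [add_zero] using hnt)]
      simp [add_zero]
    · have : n = 0 := by omega
      subst this; rfl

theorem Ffn_zero (hnt : (zero : α) ≠ one) {q : ℕ} (hq : 1 ≤ q) :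
    Ffn (zero : α) q = 0 := by
  unfold Ffn; rw [Msmul_zero_elem hnt hq]

theorem Msmul_one_elem {q : ℕ} (hq : 1 ≤ q) :
    Msmul ((0:ℕ), (one:α)) q = (q - 1, (one:α)) := by
  induction q with
  | zero => omega
  | succ n ih =>
    by_cases hn : 1 ≤ n
    · rw [Msmul_succ _ hn, ih hn, Madd_pos (by simpa using one_add (one:α))]
      simp [mul_one]
      omega
    · have : n = 0 := by omega
      subst this; rfl

theorem Ffn_one_elem {q : ℕ} (hq : 1 ≤ q) : Ffn (one : α) q = q - 1 := by
  unfold Ffn; rw [Msmul_one_elem hq]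

theorem Msmul_carry_unit (hnt : (zero : α) ≠ one) {q : ℕ} (hq : 1 ≤ q) :
    Msmul ((1:ℕ), (zero:α)) q = (q, (zero:α)) := by
  induction q with
  | zero => omega
  | succ n ih =>
    by_cases hn : 1 ≤ n
    · rw [Msmul_succ _ hn, ih hn, Madd_neg (by simpa [add_zero] using hnt)]
      simp [add_zero]
      omega
    · have : n = 0 := by omega
      subst this; rfl

theorem Madd_neg_pair (a : α) :
    Madd ((0:ℕ), a) ((0:ℕ), neg a) = ((1:ℕ), (zero:α)) := by
  rw [Madd_pos (by simpa using add_neg_self a)]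
  simp [mul_neg_self]

theorem Ffn_neg_rel (htot : ∀ a b : α, le a b ∨ le b a) (hnt : (zero : α) ≠ one)
    (a : α) {q : ℕ} (hq : 1 ≤ q) :
    Ffn a q + Ffn (neg a) q ≤ q ∧ q ≤ Ffn a q + Ffn (neg a) q + 1 := by
  have h1 : Madd (Msmul ((0:ℕ), a) q) (Msmul ((0:ℕ), neg a) q) = (q, (zero:α)) := by
    rw [← Madd_smul_dist htot _ _ hq, Madd_neg_pair, Msmul_carry_unit hnt hq]
  have lb := Madd_fst_lb (Msmul ((0:ℕ), a) q) (Msmul ((0:ℕ), neg a) q)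
  have ub := Madd_fst_ub (Msmul ((0:ℕ), a) q) (Msmul ((0:ℕ), neg a) q)
  rw [h1] at lb ub
  unfold Ffn
  exact ⟨lb, by omega⟩

/-- lexicographic order on ℕ × α -/
def Mle (x y : ℕ × α) : Prop := x.1 < y.1 ∨ (x.1 = y.1 ∧ le x.2 y.2)

theorem Madd_mono {x y : ℕ × α} {n : ℕ} {c d : α}
    (hxy : Mle x y) (hcd : le c d) : Mle (Madd (n, c) x) (Madd (n, d) y) := by
  rcases hxy with hlt | ⟨heq, hle⟩
  · -- x.1 < y.1
    by_cases h1 : add c x.2 = one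
    · by_cases h2 : add d y.2 = one
      · rw [Madd_pos (by exact h1), Madd_pos (by exact h2)]
        left; simp; omega
      · rw [Madd_pos (by exact h1), Madd_neg (by exact h2)]
        by_cases h3 : n + x.1 + 1 < n + y.1
        · left; simpa using h3
        · right
          constructor
          · simp; omega
          · show le (mul c x.2) (add d y.2)
            exact le_trans (mul_le_left c x.2) (le_trans hcd (le_add_left d y.2))
    · by_cases h2 : add d y.2 = one
      · rw [Madd_neg (by exact h1), Madd_pos (by exact h2)]
        left; simp; omega
      · rw [Madd_neg (by exact h1), Madd_neg (by exact h2)]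
        left; simp; omega
  · -- x.1 = y.1, x.2 ≤ y.2
    by_cases h1 : add c x.2 = one
    · have h2 : add d y.2 = one := by
        have hle2 : le (add c x.2) (add d y.2) := add_le_add hcd hle
        rw [h1] at hle2
        exact (one_le_iff.1 hle2)
      rw [Madd_pos (by exact h1), Madd_pos (by exact h2)]
      right
      exact ⟨by simp [heq], mul_le_mul hcd hle⟩
    · by_cases h2 : add d y.2 = one
      · rw [Madd_neg (by exact h1), Madd_pos (by exact h2)]
        left; simp; omega
      · rw [Madd_neg (by exact h1), Madd_neg (by exact h2)]
        right
        exact ⟨by simp [heq], add_le_add hcd hle⟩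

theorem Ffn_mono {a b : α} (h : le a b) {q : ℕ} (hq : 1 ≤ q) :
    Ffn a q ≤ Ffn b q := by
  have key : ∀ n, 1 ≤ n → Mle (Msmul ((0:ℕ), a) n) (Msmul ((0:ℕ), b) n) := by
    intro n hn
    induction n with
    | zero => omega
    | succ m ih =>
      by_cases hm : 1 ≤ m
      · rw [Msmul_succ _ hm, Msmul_succ _ hm]
        exact Madd_mono (ih hm) h
      · have : m = 0 := by omega
        subst this
        exact Or.inr ⟨rfl, h⟩
  rcases key q hq with hlt | ⟨heq, _⟩
  · exact Nat.le_of_lt hlt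
  · exact Nat.le_of_eq heq

end MV
namespace MV

variable {α : Type*} [MV α]

noncomputable def hfun (a : α) : ℝ :=
  sSup {r : ℝ | ∃ q : ℕ, 1 ≤ q ∧ r = (Ffn a q : ℝ) / q}

theorem hfun_set_nonempty (a : α) :
    {r : ℝ | ∃ q : ℕ, 1 ≤ q ∧ r = (Ffn a q : ℝ) / q}.Nonempty :=
  ⟨(Ffn a 1 : ℝ) / (1:ℕ), 1, Nat.le_refl 1, rfl⟩

theorem hfun_set_bdd (a : α) :
    BddAbove {r : ℝ | ∃ q : ℕ, 1 ≤ q ∧ r = (Ffn a q : ℝ) / q} := by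
  refine ⟨1, ?_⟩
  rintro r ⟨q, hq, rfl⟩
  have h1 : (Ffn a q : ℝ) ≤ (q : ℝ) := by
    have := Ffn_le a hq
    have h2 : Ffn a q ≤ q := by omega
    exact_mod_cast h2
  have hqpos : (0 : ℝ) < q := by exact_mod_cast hq
  rw [div_le_one hqpos]
  exact h1

theorem hfun_lb (a : α) {q : ℕ} (hq : 1 ≤ q) : (Ffn a q : ℝ) / q ≤ hfun a :=
  le_csSup (hfun_set_bdd a) ⟨q, hq, rfl⟩

theorem hfun_ub (htot : ∀ a b : α, le a b ∨ le b a) (a : α) {k : ℕ} (hk : 1 ≤ k) :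
    hfun a ≤ ((Ffn a k : ℝ) + 1) / k := by
  apply csSup_le (hfun_set_nonempty a)
  rintro r ⟨q, hq, rfl⟩
  have hqpos : (0 : ℝ) < q := by exact_mod_cast hq
  have hkpos : (0 : ℝ) < k := by exact_mod_cast hk
  rw [div_le_div_iff₀ hqpos hkpos]
  have key : k * Ffn a q ≤ q * Ffn a k + q := by
    have h1 := Ffn_mul_le htot a hk hq
    have h2 := Ffn_mul_ge htot a hk hq
    have h3 : q * k = k * q := by ring
    rw [h3] at h2
    omega
  calc (Ffn a q : ℝ) * k = (k * Ffn a q : ℕ) := by push_cast; ring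
    _ ≤ (q * Ffn a k + q : ℕ) := by exact_mod_cast key
    _ = ((Ffn a k : ℝ) + 1) * q := by push_cast; ring

theorem hfun_bounds (htot : ∀ a b : α, le a b ∨ le b a) (a : α) {q : ℕ} (hq : 1 ≤ q) :
    (Ffn a q : ℝ) ≤ q * hfun a ∧ q * hfun a ≤ (Ffn a q : ℝ) + 1 := by
  have hqpos : (0 : ℝ) < q := by exact_mod_cast hq
  constructor
  · have := hfun_lb a hq
    calc (Ffn a q : ℝ) = q * ((Ffn a q : ℝ) / q) := by field_simp
      _ ≤ q * hfun a := by nlinarith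
  · have := hfun_ub htot a hq
    calc (q : ℝ) * hfun a ≤ q * (((Ffn a q : ℝ) + 1) / q) := by nlinarith
      _ = (Ffn a q : ℝ) + 1 := by field_simp

theorem hfun_nonneg (a : α) : 0 ≤ hfun a := by
  have := hfun_lb a (Nat.le_refl 1)
  simpa [Ffn_one_val] using this

theorem hfun_le_one (a : α) : hfun a ≤ 1 := by
  apply csSup_le (hfun_set_nonempty a)
  rintro r ⟨q, hq, rfl⟩
  have hqpos : (0 : ℝ) < q := by exact_mod_cast hq
  rw [div_le_one hqpos]
  have h2 : Ffn a q ≤ q := by have := Ffn_le a hq; omega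
  exact_mod_cast h2

theorem eq_zero_of_abs_mul_le {x C : ℝ} (hC : 0 ≤ C)
    (h : ∀ q : ℕ, 1 ≤ q → |x| * q ≤ C) : x = 0 := by
  by_contra hx
  have hpos : 0 < |x| := abs_pos.2 hx
  obtain ⟨q, hq⟩ := exists_nat_gt (C / |x|)
  have hq1 : 1 ≤ q := by
    by_contra hq1
    have : q = 0 := by omega
    subst this
    simp at hq
    nlinarith [div_nonneg hC hpos.le]
  have := h q hq1
  rw [div_lt_iff₀ hpos] at hq
  nlinarith

theorem hfun_zero (hnt : (zero : α) ≠ one)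
    (htot : ∀ a b : α, le a b ∨ le b a) : hfun (zero : α) = 0 := by
  apply eq_zero_of_abs_mul_le (C := 1) zero_le_one
  intro q hq
  obtain ⟨h1, h2⟩ := hfun_bounds htot (zero : α) hq
  rw [Ffn_zero hnt hq] at h1 h2
  rw [abs_of_nonneg (hfun_nonneg _)]
  push_cast at h2 ⊢
  nlinarith

theorem hfun_one (htot : ∀ a b : α, le a b ∨ le b a) : hfun (one : α) = 1 := by
  have key : 1 - hfun (one : α) = 0 := by
    apply eq_zero_of_abs_mul_le (C := 1) zero_le_one
    intro q hq
    obtain ⟨h1, h2⟩ := hfun_bounds htot (one : α) hq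
    rw [Ffn_one_elem hq] at h1 h2
    have hcast : ((q - 1 : ℕ) : ℝ) = (q : ℝ) - 1 := by
      have : 1 ≤ q := hq
      push_cast [this]
      ring
    rw [hcast] at h1 h2
    rw [abs_of_nonneg (by nlinarith [hfun_le_one (one : α)])]
    nlinarith
  linarith

theorem hfun_mono (htot : ∀ a b : α, le a b ∨ le b a) {a b : α} (h : le a b) :
    hfun a ≤ hfun b := by
  apply csSup_le (hfun_set_nonempty a)
  rintro r ⟨q, hq, rfl⟩
  refine _root_.le_trans ?_ (hfun_lb b hq)
  have hqpos : (0 : ℝ) < q := by exact_mod_cast hq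
  gcongr
  exact_mod_cast Ffn_mono h hq

theorem hfun_neg (hnt : (zero : α) ≠ one) (htot : ∀ a b : α, le a b ∨ le b a)
    (a : α) : hfun (neg a) = 1 - hfun a := by
  have key : hfun a + hfun (neg a) - 1 = 0 := by
    apply eq_zero_of_abs_mul_le (C := 3) (by norm_num)
    intro q hq
    obtain ⟨h1, h2⟩ := hfun_bounds htot a hq
    obtain ⟨h3, h4⟩ := hfun_bounds htot (neg a) hq
    obtain ⟨h5, h6⟩ := Ffn_neg_rel htot hnt a hq
    have h5' : (Ffn a q : ℝ) + (Ffn (neg a) q : ℝ) ≤ q := by exact_mod_cast h5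
    have h6' : (q : ℝ) ≤ (Ffn a q : ℝ) + (Ffn (neg a) q : ℝ) + 1 := by exact_mod_cast h6
    have hqnn : (0:ℝ) ≤ (q:ℝ) := by positivity
    have habs : |(hfun a + hfun (neg a) - 1) * q| ≤ 3 := by
      rw [abs_le]; constructor <;> nlinarith
    calc |hfun a + hfun (neg a) - 1| * q
        = |(hfun a + hfun (neg a) - 1) * q| := by rw [abs_mul, abs_of_nonneg hqnn]
      _ ≤ 3 := habs
  linarith

end MV
namespace MV

variable {α : Type*} [MV α]

theorem hfun_add (hnt : (zero : α) ≠ one) (htot : ∀ a b : α, le a b ∨ le b a)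
    (a b : α) : hfun (add a b) = min (hfun a + hfun b) 1 := by
  by_cases hab : add a b = one
  · rw [hab, hfun_one htot]
    have h1 : le (neg a) b := add_eq_one_iff.1 hab
    have h2 : hfun (neg a) ≤ hfun b := hfun_mono htot h1
    rw [hfun_neg hnt htot] at h2
    symm
    rw [min_eq_right]
    linarith
  · have hM : Madd ((0:ℕ), a) ((0:ℕ), b) = ((0:ℕ), add a b) := by
      rw [Madd_neg hab]
      rfl
    have key : ∀ q : ℕ, 1 ≤ q →
        Ffn a q + Ffn b q ≤ Ffn (add a b) q ∧
        Ffn (add a b) q ≤ Ffn a q + Ffn b q + 1 := by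
      intro q hq
      have e1 : Msmul ((0:ℕ), add a b) q
          = Madd (Msmul ((0:ℕ), a) q) (Msmul ((0:ℕ), b) q) := by
        rw [← Madd_smul_dist htot _ _ hq, hM]
      have lb := Madd_fst_lb (Msmul ((0:ℕ), a) q) (Msmul ((0:ℕ), b) q)
      have ub := Madd_fst_ub (Msmul ((0:ℕ), a) q) (Msmul ((0:ℕ), b) q)
      rw [← e1] at lb ub
      exact ⟨lb, ub⟩
    have main : hfun (add a b) = hfun a + hfun b := by
      have hz : hfun (add a b) - hfun a - hfun b = 0 := by
        apply eq_zero_of_abs_mul_le (C := 3) (by norm_num)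
        intro q hq
        obtain ⟨h1, h2⟩ := hfun_bounds htot (add a b) hq
        obtain ⟨h3, h4⟩ := hfun_bounds htot a hq
        obtain ⟨h5, h6⟩ := hfun_bounds htot b hq
        obtain ⟨k1, k2⟩ := key q hq
        have k1' : (Ffn a q : ℝ) + (Ffn b q : ℝ) ≤ (Ffn (add a b) q : ℝ) := by
          exact_mod_cast k1
        have k2' : (Ffn (add a b) q : ℝ) ≤ (Ffn a q : ℝ) + (Ffn b q : ℝ) + 1 := by
          exact_mod_cast k2
        have hqnn : (0:ℝ) ≤ (q:ℝ) := by positivity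
        have habs : |(hfun (add a b) - hfun a - hfun b) * q| ≤ 3 := by
          rw [abs_le]; constructor <;> nlinarith
        calc |hfun (add a b) - hfun a - hfun b| * q
            = |(hfun (add a b) - hfun a - hfun b) * q| := by
              rw [abs_mul, abs_of_nonneg hqnn]
          _ ≤ 3 := habs
      linarith
    rw [main, min_eq_left]
    rw [← main]
    exact hfun_le_one _

theorem hfun_smul_le (hnt : (zero : α) ≠ one) (htot : ∀ a b : α, le a b ∨ le b a)
    (a : α) (k : ℕ) : hfun (smul k a) ≤ k * hfun a := by
  induction k with
  | zero =>
    have e : hfun (smul 0 a) = 0 := hfun_zero hnt htot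
    rw [e]
    simp
  | succ n ih =>
    rw [smul_succ, hfun_add hnt htot]
    have h1 : hfun a + hfun (smul n a) ≤ hfun a + n * hfun a := by linarith
    calc min (hfun a + hfun (smul n a)) 1 ≤ hfun a + hfun (smul n a) := min_le_left _ _
      _ ≤ (n + 1 : ℕ) * hfun a := by push_cast; linarith

theorem hfun_pos (hnt : (zero : α) ≠ one) (htot : ∀ a b : α, le a b ∨ le b a)
    (hord : ∀ a : α, a ≠ zero → ∃ k : ℕ, 1 ≤ k ∧ smul k a = one)
    {c : α} (hc : c ≠ zero) : 0 < hfun c := by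
  obtain ⟨k, hk1, hk⟩ := hord c hc
  have h1 : hfun (smul k c) ≤ k * hfun c := hfun_smul_le hnt htot c k
  rw [hk, hfun_one htot] at h1
  by_contra hcon
  push_neg at hcon
  have hk' : (0:ℝ) ≤ k := by positivity
  nlinarith

theorem hfun_lt (hnt : (zero : α) ≠ one) (htot : ∀ a b : α, le a b ∨ le b a)
    (hord : ∀ a : α, a ≠ zero → ∃ k : ℕ, 1 ≤ k ∧ smul k a = one)
    {a b : α} (h : le a b) (hne : a ≠ b) : hfun a < hfun b := by
  obtain ⟨c, rfl⟩ := le_iff_exists.1 h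
  have hc : c ≠ zero := by
    rintro rfl
    exact hne (add_zero a).symm
  have hcpos : 0 < hfun c := hfun_pos hnt htot hord hc
  have ha1 : hfun a < 1 := by
    have hane : a ≠ one := by
      rintro rfl
      apply hne
      rw [one_add]
    have hnane : neg a ≠ zero := by
      intro hcon
      apply hane
      rw [← neg_neg a, hcon]
      rfl
    have := hfun_pos hnt htot hord hnane
    rw [hfun_neg hnt htot] at this
    linarith
  rw [hfun_add hnt htot]
  rcases le_total (hfun a + hfun c) 1 with hle | hle
  · rw [min_eq_left hle]; linarith
  · rw [min_eq_right hle]; linarith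

theorem hfun_injective (hnt : (zero : α) ≠ one)
    (htot : ∀ a b : α, le a b ∨ le b a)
    (hord : ∀ a : α, a ≠ zero → ∃ k : ℕ, 1 ≤ k ∧ smul k a = one) :
    Function.Injective (hfun (α := α)) := by
  intro a b hab
  by_contra hne
  rcases htot a b with h | h
  · exact absurd hab (ne_of_lt (hfun_lt hnt htot hord h hne))
  · exact absurd hab.symm (ne_of_lt (hfun_lt hnt htot hord h (Ne.symm hne)))

end MV
/-- for a nontrivial MV-algebra N the following are equivalent:
(a) N is simple ({0} is the only proper ideal); (b) every nonzero element has
finite order; (c) N embeds (injectively, preserving the operations) into the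
standard MV-algebra [0,1]. -/
theorem stmt_16 {α : Type*} [MV α] (hnt : (MV.zero : α) ≠ MV.one) :
    List.TFAE
      [(∀ J : Set α, MV.IsIdeal J → J ≠ Set.univ → J = {(MV.zero : α)}),
       (∀ a : α, a ≠ MV.zero → ∃ k : ℕ, 1 ≤ k ∧ MV.smul k a = MV.one),
       (∃ h : α → ℝ, MV.Hom h ∧ Function.Injective h)] := by
  tfae_have 1 → 2 := by
    intro hsimp a ha
    set J : Set α := {b : α | ∃ k : ℕ, MV.le b (MV.smul k a)} with hJdef
    have hJideal : MV.IsIdeal J := by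
      refine ⟨⟨0, MV.le_refl _⟩, ?_, ?_⟩
      · rintro x y ⟨k, hk⟩ ⟨m, hm⟩
        exact ⟨k + m, by rw [MV.smul_add_dist]; exact MV.add_le_add hk hm⟩
      · rintro x y hxy ⟨k, hk⟩
        exact ⟨k, MV.le_trans hxy hk⟩
    by_cases hJu : J = Set.univ
    · have hone : (MV.one : α) ∈ J := by rw [hJu]; trivial
      obtain ⟨k, hk⟩ := hone
      have hko : MV.smul k a = MV.one := (MV.one_le_iff.1 hk)
      refine ⟨k, ?_, hko⟩
      by_contra hk0
      have : k = 0 := by omega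
      subst this
      exact hnt hko
    · have hJ0 := hsimp J hJideal hJu
      have haJ : a ∈ J := by
        refine ⟨1, ?_⟩
        have e : MV.smul 1 a = a := MV.add_zero a
        rw [e]
        exact MV.le_refl a
      rw [hJ0] at haJ
      exact absurd haJ ha
  tfae_have 2 → 3 := by
    intro hord
    have htot := MV.chain_of_order hord
    refine ⟨MV.hfun, ⟨?_, ?_, ?_, ?_⟩, MV.hfun_injective hnt htot hord⟩
    · exact fun a => Set.mem_Icc.2 ⟨MV.hfun_nonneg a, MV.hfun_le_one a⟩
    · exact MV.hfun_add hnt htot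
    · exact MV.hfun_neg hnt htot
    · exact MV.hfun_zero hnt htot
  tfae_have 3 → 1 := by
    rintro ⟨h, ⟨hIcc, hadd, hneg, hzero⟩, hinj⟩ J hJid hJne
    obtain ⟨hz, hcl, hdown⟩ := hJid
    have hone : h (MV.one : α) = 1 := by
      have := hneg (MV.zero : α)
      rw [hzero] at this
      simpa [MV.one] using this
    ext x
    simp only [Set.mem_singleton_iff]
    constructor
    · intro hxJ
      by_contra hx
      have hhx : 0 < h x := by
        rcases (hIcc x).1.lt_or_eq with hlt | heq
        · exact hlt
        · exact absurd (hinj (by rw [← heq, hzero])) hx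
      have hsm : ∀ k : ℕ, h (MV.smul k x) = min ((k : ℝ) * h x) 1 := by
        intro k
        induction k with
        | zero =>
          have e : (MV.smul 0 x : α) = MV.zero := rfl
          rw [e, hzero]
          norm_num
        | succ n ih =>
          show h (MV.add x (MV.smul n x)) = _
          rw [hadd, ih]
          rcases le_total ((n : ℝ) * h x) 1 with hle | hle
          · rw [min_eq_left hle]
            have e : h x + (n : ℝ) * h x = ((n : ℝ) + 1) * h x := by ring
            rw [e]
            push_cast
            ring_nf
          · rw [min_eq_right hle]
            have e1 : min (h x + 1) 1 = 1 := by
              rw [min_eq_right]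
              nlinarith
            rw [e1]
            symm
            rw [min_eq_right]
            push_cast
            nlinarith
      obtain ⟨k, hk⟩ := exists_nat_ge (1 / h x)
      have hk1 : 1 ≤ (k : ℝ) * h x := by
        rw [div_le_iff₀ hhx] at hk
        linarith
      have hsk : MV.smul k x = MV.one := by
        apply hinj
        rw [hsm k, hone, min_eq_right hk1]
      have hskJ : ∀ m : ℕ, MV.smul m x ∈ J := by
        intro m
        induction m with
        | zero => exact hz
        | succ n ih => exact hcl x (MV.smul n x) hxJ ih
      have honeJ : (MV.one : α) ∈ J := hsk ▸ hskJ k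
      apply hJne
      ext y
      simp only [Set.mem_univ, iff_true]
      exact hdown y MV.one (MV.le_one y) honeJ
    · rintro rfl
      exact hz
  tfae_finish
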